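/- arXiv:2102.12680 — 3 statements merged into one kernel-verified Lean document; each statement's English description precedes it below -/
import Mathlib

section
/- Sufficiency for perfect calibration (Theorem 1): if for every bin index j ∈ {1, …, J} the bin-conditional average confidence matches the transformation decomposition, i.e. E_μ[g∘X | A_j] = α_j · γ_j + β_j · (1 − γ_j), then the calibrator is perfectly calibrated: CE(g) = 0. -/
open MeasureTheory

/-- Conditional probability of `E` given the event `A`, taken to be `0` when `A` is `μ`-null. -/
noncomputable def condProbE {Ω : Type*} [MeasurableSpace Ω] (μ : Measure Ω)
    (E A : Set Ω) : ℝ :=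
  if μ A = 0 then 0 else (μ (E ∩ A)).toReal / (μ A).toReal

/-- Conditional expectation of `h` given the event `A`, taken to be `0` when `A` is `μ`-null. -/
noncomputable def condMeanE {Ω : Type*} [MeasurableSpace Ω] (μ : Measure Ω)
    (h : Ω → ℝ) (A : Set Ω) : ℝ :=
  if μ A = 0 then 0 else (∫ ω in A, h ω ∂μ) / (μ A).toReal

lemma total_prob {Ω : Type*} [MeasurableSpace Ω] (μ : Measure Ω) [IsProbabilityMeasure μ]
    (C E A : Set Ω) (hE : MeasurableSet E) :
    condProbE μ C A =
      condProbE μ C (E ∩ A) * condProbE μ E A +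
      condProbE μ C (Eᶜ ∩ A) * (1 - condProbE μ E A) := by
  by_cases hA : μ A = 0
  · have h1 : μ (E ∩ A) = 0 := measure_mono_null Set.inter_subset_right hA
    have h2 : μ (Eᶜ ∩ A) = 0 := measure_mono_null Set.inter_subset_right hA
    simp [condProbE, hA, h1, h2]
  · have hsplit : μ (E ∩ A) + μ (Eᶜ ∩ A) = μ A := by
      have := measure_inter_add_diff (μ := μ) A hE
      rwa [Set.inter_comm, Set.diff_eq, Set.inter_comm A Eᶜ] at this
    have hsplitC : μ (C ∩ (E ∩ A)) + μ (C ∩ (Eᶜ ∩ A)) = μ (C ∩ A) := by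
      have := measure_inter_add_diff (μ := μ) (C ∩ A) hE
      rw [Set.diff_eq] at this
      rw [show C ∩ A ∩ E = C ∩ (E ∩ A) by ac_rfl, show C ∩ A ∩ Eᶜ = C ∩ (Eᶜ ∩ A) by ac_rfl] at this
      exact this
    have fin : ∀ s : Set Ω, μ s ≠ ⊤ := fun s => measure_ne_top μ s
    have ha : (0:ℝ) < (μ A).toReal := ENNReal.toReal_pos hA (fin A)
    have hre : ((μ (E ∩ A)).toReal + (μ (Eᶜ ∩ A)).toReal = (μ A).toReal) := by
      rw [← ENNReal.toReal_add (fin _) (fin _), hsplit]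
    have hreC : ((μ (C ∩ (E ∩ A))).toReal + (μ (C ∩ (Eᶜ ∩ A))).toReal = (μ (C ∩ A)).toReal) := by
      rw [← ENNReal.toReal_add (fin _) (fin _), hsplitC]
    by_cases h1 : μ (E ∩ A) = 0
    · have hc1 : μ (C ∩ (E ∩ A)) = 0 := measure_mono_null Set.inter_subset_right h1
      have h2 : μ (Eᶜ ∩ A) ≠ 0 := by
        intro h; exact hA (by rw [← hsplit, h1, h]; simp)
      simp only [condProbE, if_neg hA, if_pos h1, if_neg h2]
      rw [h1] at hre
      rw [hc1] at hreC
      simp only [ENNReal.toReal_zero, zero_add] at hre hreC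
      rw [hre, ← hreC, h1]
      simp
    · by_cases h2 : μ (Eᶜ ∩ A) = 0
      · have hc2 : μ (C ∩ (Eᶜ ∩ A)) = 0 := measure_mono_null Set.inter_subset_right h2
        simp only [condProbE, if_neg hA, if_neg h1, if_pos h2]
        rw [h2] at hre; rw [hc2] at hreC
        simp only [ENNReal.toReal_zero, add_zero] at hre hreC
        rw [hre, ← hreC]
        have he : (0:ℝ) < (μ (E ∩ A)).toReal := ENNReal.toReal_pos h1 (fin _)
        field_simp
        ring
      · simp only [condProbE, if_neg hA, if_neg h1, if_neg h2]
        have he : (0:ℝ) < (μ (E ∩ A)).toReal := ENNReal.toReal_pos h1 (fin _)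
        have he' : (0:ℝ) < (μ (Eᶜ ∩ A)).toReal := ENNReal.toReal_pos h2 (fin _)
        have key : 1 - (μ (E ∩ A)).toReal / (μ A).toReal = (μ (Eᶜ ∩ A)).toReal / (μ A).toReal := by
          field_simp; linarith
        rw [key]
        field_simp
        nlinarith [hreC, he.le, he'.le]

/-- Sufficiency for perfect calibration (Theorem 1): if for every bin index `j` the
bin-conditional average confidence matches the transformation decomposition,
`E[g∘X | A_j] = α_j γ_j + β_j (1 - γ_j)`, then the calibrator is perfectly calibrated:
`CE(g) = Σ_j μ(A_j) · |μ[f∘X = Y | A_j] - E[g∘X | A_j]| = 0`. -/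
theorem sufficiency_for_perfect_calibration
    {Ω 𝒳 𝒴 : Type*} [MeasurableSpace Ω] [MeasurableSpace 𝒳] [MeasurableSpace 𝒴]
    [Countable 𝒴] [MeasurableSingletonClass 𝒴]
    (μ : Measure Ω) [IsProbabilityMeasure μ]
    (X : Ω → 𝒳) (Y : Ω → 𝒴) (f : 𝒳 → 𝒴) (g : 𝒳 → ℝ)
    (hX : Measurable X) (hY : Measurable Y) (hf : Measurable f) (hg : Measurable g)
    (hg01 : ∀ s, g s ∈ Set.Icc (0 : ℝ) 1)
    (J : ℕ) (hJ : 0 < J) (P : Fin J → Set ℝ)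
    (hPmeas : ∀ j, MeasurableSet (P j))
    (hPdisj : Pairwise (Function.onFun Disjoint P))
    (hPcover : Set.Icc (0 : ℝ) 1 ⊆ ⋃ j, P j)
    (X' : Ω → 𝒳) (hX' : Measurable X')
    (hsuff : ∀ j : Fin J,
      condMeanE μ (fun ω => g (X ω)) {ω | g (X ω) ∈ P j} =
        condProbE μ {ω | f (X ω) = Y ω}
            ({ω | f (X' ω) = f (X ω)} ∩ {ω | g (X ω) ∈ P j}) *
          condProbE μ {ω | f (X' ω) = f (X ω)} {ω | g (X ω) ∈ P j} +
        condProbE μ {ω | f (X ω) = Y ω}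
            ({ω | f (X' ω) = f (X ω)}ᶜ ∩ {ω | g (X ω) ∈ P j}) *
          (1 - condProbE μ {ω | f (X' ω) = f (X ω)} {ω | g (X ω) ∈ P j})) :
    (∑ j : Fin J, (μ {ω | g (X ω) ∈ P j}).toReal *
        |condProbE μ {ω | f (X ω) = Y ω} {ω | g (X ω) ∈ P j} -
          condMeanE μ (fun ω => g (X ω)) {ω | g (X ω) ∈ P j}|) = 0 := by
  have hE : MeasurableSet {ω | f (X' ω) = f (X ω)} :=
    measurableSet_eq_fun (hf.comp hX') (hf.comp hX)
  apply Finset.sum_eq_zero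
  intro j _
  rw [hsuff j, ← total_prob μ _ _ _ hE, sub_self, abs_zero, mul_zero]
end

section
/- Generalization bound on the calibration error (Theorem 2): let (X_1, Y_1), …, (X_N, Y_N) be i.i.d. samples whose common law equals the law of (X, Y) under μ, defined on a probability space (Ω', ℙ). Define the random empirical quantities I_j = {n ∈ {1,…,N} : g(X_n) ∈ P_j}, ŵ_j = |I_j| / N, ê_j = (1/|I_j|) Σ_{n ∈ I_j} (1{Y_n = f(X_n)} − g(X_n)) when I_j ≠ ∅ and ê_j = 0 otherwise, and ECE_Z(g) = Σ_{j=1}^J ŵ_j |ê_j|. Then for every δ ∈ (0, 1), with probability at least 1 − δ over the sample, CE(g) ≤ ECE_Z(g) + (J·√2/√N) · √(2·ln 2 − ln δ). -/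
open MeasureTheory

open Classical in
/-- The random set of sample indices whose confidence falls in the bin `Pj`. -/
noncomputable def binIndices {𝒳 𝒴 Ω' : Type*} (g : 𝒳 → ℝ) (Pj : Set ℝ) (N : ℕ)
    (W : Fin N → Ω' → 𝒳 × 𝒴) (ω' : Ω') : Finset (Fin N) :=
  Finset.univ.filter (fun n => g (W n ω').1 ∈ Pj)

/-- The empirical bin weight `ŵ_j = |I_j| / N`. -/
noncomputable def empWeight {𝒳 𝒴 Ω' : Type*} (g : 𝒳 → ℝ) (Pj : Set ℝ) (N : ℕ)
    (W : Fin N → Ω' → 𝒳 × 𝒴) (ω' : Ω') : ℝ :=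
  ((binIndices g Pj N W ω').card : ℝ) / (N : ℝ)

open Classical in
/-- The empirical per-bin calibration gap
`ê_j = |I_j|⁻¹ Σ_{n ∈ I_j} (1{Y_n = f(X_n)} - g(X_n))`, set to `0` when `I_j = ∅`. -/
noncomputable def empGap {𝒳 𝒴 Ω' : Type*} (f : 𝒳 → 𝒴) (g : 𝒳 → ℝ) (Pj : Set ℝ) (N : ℕ)
    (W : Fin N → Ω' → 𝒳 × 𝒴) (ω' : Ω') : ℝ :=
  if (binIndices g Pj N W ω').card = 0 then 0
  else (∑ n ∈ binIndices g Pj N W ω',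
      ((if (W n ω').2 = f (W n ω').1 then (1 : ℝ) else 0) - g (W n ω').1)) /
    ((binIndices g Pj N W ω').card : ℝ)

section Auxiliary

open Real

private lemma hoef_pos {p : ℝ} (hp0 : 0 ≤ p) (hp1 : p ≤ 1) (t : ℝ) :
    0 < 1 - p + p * exp t := by
  rcases le_total (exp t) 1 with h | h
  · nlinarith [exp_pos t, mul_le_mul_of_nonneg_left h hp0]
  · nlinarith [mul_le_mul_of_nonneg_left h hp0]

private lemma hoef_core {p : ℝ} (hp0 : 0 ≤ p) (hp1 : p ≤ 1) (t : ℝ) :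
    1 - p + p * exp t ≤ exp (p * t + t ^ 2 / 8) := by
  set h : ℝ → ℝ := fun t => 1 - p + p * exp t with hh
  have hpos : ∀ t, 0 < h t := fun t => hoef_pos hp0 hp1 t
  set G : ℝ → ℝ := fun t => p + t / 4 - p * exp t / h t with hG
  set F : ℝ → ℝ := fun t => p * t + t ^ 2 / 8 - Real.log (h t) with hF
  have hderivh : ∀ t, HasDerivAt h (p * exp t) t := by
    intro t
    exact ((Real.hasDerivAt_exp t).const_mul p).const_add (1 - p)
  have hderivF : ∀ t, HasDerivAt F (G t) t := by
    intro t
    have h1 : HasDerivAt (fun t => Real.log (h t)) (p * exp t / h t) t :=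
      (hderivh t).log (hpos t).ne'
    have h2 : HasDerivAt (fun t => p * t + t ^ 2 / 8) (p + t / 4) t := by
      have h3 : HasDerivAt (fun t : ℝ => p * t) p t := by
        simpa using (hasDerivAt_id t).const_mul p
      have h4 := h3.add ((hasDerivAt_pow 2 t).div_const 8)
      rw [show p + t / 4 = p + ((2 : ℕ) : ℝ) * t ^ (2 - 1) / 8 by
        rw [show (2 - 1 : ℕ) = 1 from rfl]; push_cast; ring]
      exact h4
    exact h2.sub h1
  have hderivG : ∀ t, HasDerivAt G (1 / 4 - p * exp t * (1 - p) / (h t) ^ 2) t := by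
    intro t
    have h1 : HasDerivAt (fun t => p * exp t / h t)
        ((p * exp t * h t - p * exp t * (p * exp t)) / (h t) ^ 2) t :=
      ((Real.hasDerivAt_exp t).const_mul p).div (hderivh t) (hpos t).ne'
    have h2 : HasDerivAt (fun t => p + t / 4) (1 / 4) t := by
      simpa using ((hasDerivAt_id t).div_const 4).const_add p
    have := h2.sub h1
    have heq : (p * exp t * h t - p * exp t * (p * exp t)) / (h t) ^ 2
        = p * exp t * (1 - p) / (h t) ^ 2 := by
      congr 1; simp only [hh]; ring
    rw [heq] at this
    exact this
  have hGnn : ∀ t, 0 ≤ 1 / 4 - p * exp t * (1 - p) / (h t) ^ 2 := by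
    intro t
    rw [sub_nonneg, div_le_iff₀ (pow_pos (hpos t) 2)]
    have : h t = (1 - p) + p * exp t := rfl
    nlinarith [sq_nonneg ((1 - p) - p * exp t)]
  have hGmono : Monotone G := by
    refine monotone_of_deriv_nonneg (fun t => (hderivG t).differentiableAt) (fun t => ?_)
    rw [(hderivG t).deriv]; exact hGnn t
  have hG0 : G 0 = 0 := by simp [hG, hh]
  have hF0 : F 0 = 0 := by simp [hF, hh]
  have hFnn : ∀ t, 0 ≤ F t := by
    intro t
    have hdF : Differentiable ℝ F := fun t => (hderivF t).differentiableAt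
    rcases le_total 0 t with ht | ht
    · have : MonotoneOn F (Set.Ici 0) := by
        refine monotoneOn_of_deriv_nonneg (convex_Ici 0) hdF.continuous.continuousOn
          (hdF.differentiableOn) (fun x hx => ?_)
        rw [(hderivF x).deriv]
        rw [interior_Ici] at hx
        calc (0:ℝ) = G 0 := hG0.symm
        _ ≤ G x := hGmono hx.le
      have := this Set.self_mem_Ici ht ht
      rwa [hF0] at this
    · have : AntitoneOn F (Set.Iic 0) := by
        refine antitoneOn_of_deriv_nonpos (convex_Iic 0) hdF.continuous.continuousOn
          (hdF.differentiableOn) (fun x hx => ?_)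
        rw [(hderivF x).deriv]
        rw [interior_Iic] at hx
        calc G x ≤ G 0 := hGmono hx.le
        _ = 0 := hG0
      have := this ht Set.self_mem_Iic ht
      rwa [hF0] at this
  have := hFnn t
  simp only [hF] at this
  have hlog : Real.log (h t) ≤ p * t + t ^ 2 / 8 := by linarith [this]
  calc h t = exp (Real.log (h t)) := (Real.exp_log (hpos t)).symm
  _ ≤ exp (p * t + t ^ 2 / 8) := exp_le_exp.mpr hlog

private lemma integrable_exp_mul_bounded {Ω' : Type*} [MeasurableSpace Ω'] (Pr : Measure Ω')
    [IsProbabilityMeasure Pr] (U : Ω' → ℝ) (hU : Measurable U) (hb : ∀ ω, |U ω| ≤ 1) (t : ℝ) :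
    Integrable (fun ω => exp (t * U ω)) Pr := by
  refine (integrable_const (exp |t|)).mono' (hU.const_mul t).exp.aestronglyMeasurable
    (Filter.Eventually.of_forall fun ω => ?_)
  rw [Real.norm_eq_abs, abs_of_pos (exp_pos _)]
  refine exp_le_exp.mpr ?_
  calc t * U ω ≤ |t * U ω| := le_abs_self _
  _ = |t| * |U ω| := abs_mul t (U ω)
  _ ≤ |t| * 1 := by gcongr; exact hb ω
  _ = |t| := mul_one _

private lemma mgf_le_of_bounded {Ω' : Type*} [MeasurableSpace Ω'] (Pr : Measure Ω')
    [IsProbabilityMeasure Pr] (U : Ω' → ℝ) (hU : Measurable U) (hb : ∀ ω, |U ω| ≤ 1) (t : ℝ) :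
    ∫ ω, exp (t * U ω) ∂Pr ≤ exp (t * (∫ ω, U ω ∂Pr) + t ^ 2 / 2) := by
  have hUint : Integrable U Pr := by
    refine (integrable_const (1 : ℝ)).mono' hU.aestronglyMeasurable
      (Filter.Eventually.of_forall fun ω => by simpa using hb ω)
  set m := ∫ ω, U ω ∂Pr with hm
  have hm1 : |m| ≤ 1 := by
    have h1 : |m| ≤ ∫ ω, |U ω| ∂Pr := by
      simpa [Real.norm_eq_abs] using norm_integral_le_integral_norm (μ := Pr) U
    have h2 : ∫ ω, |U ω| ∂Pr ≤ ∫ _ : Ω', (1:ℝ) ∂Pr :=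
      integral_mono hUint.abs (integrable_const 1) (fun ω => hb ω)
    simp only [integral_const, measure_univ, probReal_univ, ENNReal.toReal_one, smul_eq_mul, one_mul] at h2
    linarith
  set c1 := (exp (-t) + exp t) / 2 with hc1
  set c2 := (exp t - exp (-t)) / 2 with hc2
  have hpt : ∀ ω, exp (t * U ω) ≤ c1 + U ω * c2 := by
    intro ω
    have h1 : (0:ℝ) ≤ (1 - U ω) / 2 := by have := (abs_le.mp (hb ω)).2; linarith
    have h2 : (0:ℝ) ≤ (1 + U ω) / 2 := by have := (abs_le.mp (hb ω)).1; linarith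
    have hsum : (1 - U ω) / 2 + (1 + U ω) / 2 = 1 := by ring
    have := convexOn_exp.2 (Set.mem_univ (-t)) (Set.mem_univ t) h1 h2 hsum
    simp only [smul_eq_mul] at this
    have harg : (1 - U ω) / 2 * (-t) + (1 + U ω) / 2 * t = t * U ω := by ring
    rw [harg] at this
    calc exp (t * U ω) ≤ (1 - U ω) / 2 * exp (-t) + (1 + U ω) / 2 * exp t := this
    _ = c1 + U ω * c2 := by simp only [hc1, hc2]; ring
  have hint : ∫ ω, exp (t * U ω) ∂Pr ≤ c1 + m * c2 := by
    have h1 : Integrable (fun ω => c1 + U ω * c2) Pr :=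
      (integrable_const c1).add (hUint.mul_const c2)
    calc ∫ ω, exp (t * U ω) ∂Pr ≤ ∫ ω, (c1 + U ω * c2) ∂Pr :=
      integral_mono (integrable_exp_mul_bounded Pr U hU hb t) h1 hpt
    _ = c1 + m * c2 := by
      rw [integral_add (integrable_const c1) (hUint.mul_const c2), integral_const,
        integral_mul_const]
      simp [hm]
  set p := (1 + m) / 2 with hp
  have hp0 : 0 ≤ p := by have := (abs_le.mp hm1).1; simp only [hp]; linarith
  have hp1 : p ≤ 1 := by have := (abs_le.mp hm1).2; simp only [hp]; linarith
  have key := hoef_core hp0 hp1 (2 * t)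
  have e2 : exp (2 * t) = exp t * exp t := by rw [two_mul, Real.exp_add]
  have heq : c1 + m * c2 = exp (-t) * (1 - p + p * exp (2 * t)) := by
    rw [e2, Real.exp_neg]
    simp only [hc1, hc2, hp, Real.exp_neg]
    field_simp
    ring
  have hfin : exp (-t) * exp (p * (2 * t) + (2 * t) ^ 2 / 8) = exp (t * m + t ^ 2 / 2) := by
    rw [← Real.exp_add]
    congr 1
    simp only [hp]
    ring
  calc ∫ ω, exp (t * U ω) ∂Pr ≤ c1 + m * c2 := hint
  _ = exp (-t) * (1 - p + p * exp (2 * t)) := heq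
  _ ≤ exp (-t) * exp (p * (2 * t) + (2 * t) ^ 2 / 8) := by
      exact mul_le_mul_of_nonneg_left key (exp_pos _).le
  _ = exp (t * m + t ^ 2 / 2) := hfin

open ProbabilityTheory in
private lemma concentration {Ω' α : Type*} [MeasurableSpace Ω'] [MeasurableSpace α]
    (Pr : Measure Ω') [IsProbabilityMeasure Pr]
    (N : ℕ) (W : Fin N → Ω' → α) (hW : ∀ n, Measurable (W n))
    (hindep : ProbabilityTheory.iIndepFun W Pr)
    (φ : α → ℝ) (hφ : Measurable φ) (hb : ∀ a, |φ a| ≤ 1)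
    (m : ℝ) (hm : ∀ n, ∫ ω, φ (W n ω) ∂Pr = m) (ε : ℝ) (hε : 0 ≤ ε) :
    Pr {ω' | N * m + N * ε ≤ ∑ n : Fin N, φ (W n ω')} ≤
      ENNReal.ofReal (exp (-(N * ε ^ 2) / 2)) := by
  set U : Fin N → Ω' → ℝ := fun n ω => φ (W n ω) with hU
  have hUmeas : ∀ n, Measurable (U n) := fun n => hφ.comp (hW n)
  have hUb : ∀ n ω, |U n ω| ≤ 1 := fun n ω => hb _
  have hUindep : iIndepFun U Pr :=
    hindep.comp (fun _ => φ) (fun _ => hφ)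
  have hint : ∀ n ∈ Finset.univ, Integrable (fun ω => exp (ε * U n ω)) Pr :=
    fun n _ => integrable_exp_mul_bounded Pr (U n) (hUmeas n) (hUb n) ε
  have hIntSum : Integrable (fun ω => exp (ε * (∑ i : Fin N, U i) ω)) Pr :=
    hUindep.integrable_exp_mul_sum hUmeas hint
  have key := measure_ge_le_exp_mul_mgf (μ := Pr) (X := ∑ i : Fin N, U i) (t := ε)
    (N * m + N * ε) hε hIntSum
  have hmgf : mgf (∑ i : Fin N, U i) Pr ε ≤ exp (N * (ε * m + ε ^ 2 / 2)) := by
    rw [hUindep.mgf_sum hUmeas Finset.univ]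
    calc ∏ i : Fin N, mgf (U i) Pr ε ≤ ∏ _i : Fin N, exp (ε * m + ε ^ 2 / 2) := by
          refine Finset.prod_le_prod (fun i _ => mgf_nonneg) (fun i _ => ?_)
          have := mgf_le_of_bounded Pr (U i) (hUmeas i) (hUb i) ε
          rwa [hm i] at this
    _ = exp (N * (ε * m + ε ^ 2 / 2)) := by
          rw [Finset.prod_const, ← Real.exp_nat_mul]
          simp
  have hbound : (Pr {ω | N * m + N * ε ≤ (∑ i : Fin N, U i) ω}).toReal ≤
      exp (-(N * ε ^ 2) / 2) := by
    calc (Pr {ω | N * m + N * ε ≤ (∑ i : Fin N, U i) ω}).toReal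
        ≤ exp (-ε * (N * m + N * ε)) * mgf (∑ i : Fin N, U i) Pr ε := key
    _ ≤ exp (-ε * (N * m + N * ε)) * exp (N * (ε * m + ε ^ 2 / 2)) := by
        exact mul_le_mul_of_nonneg_left hmgf (exp_pos _).le
    _ = exp (-(N * ε ^ 2) / 2) := by rw [← Real.exp_add]; congr 1; ring
  have hset : {ω' | N * m + N * ε ≤ ∑ n : Fin N, φ (W n ω')} =
      {ω | N * m + N * ε ≤ (∑ i : Fin N, U i) ω} := by
    ext ω; simp [hU]
  rw [hset]
  have hne : Pr {ω | N * m + N * ε ≤ (∑ i : Fin N, U i) ω} ≠ ⊤ := measure_ne_top _ _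
  rw [← ENNReal.ofReal_toReal hne]
  exact ENNReal.ofReal_le_ofReal hbound

private lemma ce_term_eq {Ω : Type*} [MeasurableSpace Ω] (μ : Measure Ω) [IsFiniteMeasure μ]
    (E A : Set Ω) (gX : Ω → ℝ) :
    (μ A).toReal * |condProbE μ E A - condMeanE μ gX A| =
      |(μ (E ∩ A)).toReal - ∫ ω in A, gX ω ∂μ| := by
  by_cases h0 : μ A = 0
  · have hEA : μ (E ∩ A) = 0 := measure_mono_null Set.inter_subset_right h0
    simp [condProbE, condMeanE, h0, hEA, Measure.restrict_eq_zero.mpr h0]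
  · have hpos : 0 < (μ A).toReal :=
      ENNReal.toReal_pos h0 (measure_ne_top μ A)
    rw [condProbE, condMeanE, if_neg h0, if_neg h0, div_sub_div_same, abs_div,
      abs_of_pos hpos, mul_comm, div_mul_cancel₀ _ hpos.ne']

end Auxiliary

set_option maxHeartbeats 2000000 in
open Real in
/-- Generalization bound on the calibration error (Theorem 2). -/
theorem calibration_error_generalization_bound
    {Ω 𝒳 𝒴 : Type*} [MeasurableSpace Ω] [MeasurableSpace 𝒳] [MeasurableSpace 𝒴]
    [Countable 𝒴] [MeasurableSingletonClass 𝒴]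
    (μ : Measure Ω) [IsProbabilityMeasure μ]
    (X : Ω → 𝒳) (Y : Ω → 𝒴) (f : 𝒳 → 𝒴) (g : 𝒳 → ℝ)
    (hX : Measurable X) (hY : Measurable Y) (hf : Measurable f) (hg : Measurable g)
    (hg01 : ∀ s, g s ∈ Set.Icc (0 : ℝ) 1)
    (J : ℕ) (hJ : 0 < J) (P : Fin J → Set ℝ)
    (hPmeas : ∀ j, MeasurableSet (P j))
    (hPdisj : Pairwise (Function.onFun Disjoint P))
    (hPcover : Set.Icc (0 : ℝ) 1 ⊆ ⋃ j, P j)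
    {Ω' : Type*} [MeasurableSpace Ω'] (Pr : Measure Ω') [IsProbabilityMeasure Pr]
    (N : ℕ) (hN : 0 < N) (W : Fin N → Ω' → 𝒳 × 𝒴)
    (hWmeas : ∀ n, Measurable (W n))
    (hindep : ProbabilityTheory.iIndepFun W Pr)
    (hlaw : ∀ n, Measure.map (W n) Pr = Measure.map (fun ω => (X ω, Y ω)) μ)
    (δ : ℝ) (hδ : δ ∈ Set.Ioo (0 : ℝ) 1) :
    1 - ENNReal.ofReal δ ≤
      Pr {ω' |
        (∑ j : Fin J, (μ {ω | g (X ω) ∈ P j}).toReal *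
            |condProbE μ {ω | f (X ω) = Y ω} {ω | g (X ω) ∈ P j} -
              condMeanE μ (fun ω => g (X ω)) {ω | g (X ω) ∈ P j}|) ≤
          (∑ j : Fin J, empWeight g (P j) N W ω' * |empGap f g (P j) N W ω'|) +
            ((J : ℝ) * Real.sqrt 2 / Real.sqrt N) *
              Real.sqrt (2 * Real.log 2 - Real.log δ)} := by
  classical
  -- basic objects
  set χ : 𝒳 × 𝒴 → ℝ := fun q => (if q.2 = f q.1 then (1 : ℝ) else 0) - g q.1 with hχ
  set hj : Fin J → 𝒳 × 𝒴 → ℝ :=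
    fun j q => if g q.1 ∈ P j then χ q else 0 with hhj
  have hχmeas : Measurable χ := by
    refine Measurable.sub ?_ (hg.comp measurable_fst)
    exact Measurable.ite (measurableSet_eq_fun measurable_snd
      (hf.comp measurable_fst)) measurable_const measurable_const
  have hχb : ∀ q, |χ q| ≤ 1 := by
    intro q
    have h1 := (hg01 q.1).1
    have h2 := (hg01 q.1).2
    rw [abs_le]
    constructor <;> by_cases h : q.2 = f q.1 <;> simp [hχ, h] <;> linarith
  have hjmeas : ∀ j, Measurable (hj j) := by
    intro j
    exact Measurable.ite ((hg.comp measurable_fst) (hPmeas j)) hχmeas measurable_const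
  have hjb : ∀ j q, |hj j q| ≤ 1 := by
    intro j q
    by_cases h : g q.1 ∈ P j <;> simp [hhj, h]
    · exact hχb q
  -- the law
  have hXY : Measurable (fun ω => (X ω, Y ω)) := hX.prodMk hY
  set ν : Measure (𝒳 × 𝒴) := Measure.map (fun ω => (X ω, Y ω)) μ with hν
  have hνprob : IsProbabilityMeasure ν := Measure.isProbabilityMeasure_map hXY.aemeasurable
  set m : Fin J → ℝ := fun j => ∫ q, hj j q ∂ν with hm
  have hjint : ∀ j, Integrable (hj j) ν := by
    intro j
    refine (integrable_const (1 : ℝ)).mono' (hjmeas j).aestronglyMeasurable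
      (Filter.Eventually.of_forall fun q => by simpa using hjb j q)
  -- CE terms equal |m j|
  have hmμ : ∀ j, ∫ ω, hj j (X ω, Y ω) ∂μ = m j := by
    intro j
    rw [hm]
    exact (integral_map hXY.aemeasurable (hjmeas j).aestronglyMeasurable).symm
  have hE : MeasurableSet {ω | Y ω = f (X ω)} :=
    measurableSet_eq_fun hY (hf.comp hX)
  have hAmeas : ∀ j, MeasurableSet {ω | g (X ω) ∈ P j} :=
    fun j => (hg.comp hX) (hPmeas j)
  have hCE : ∀ j : Fin J, (μ {ω | g (X ω) ∈ P j}).toReal *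
      |condProbE μ {ω | f (X ω) = Y ω} {ω | g (X ω) ∈ P j} -
        condMeanE μ (fun ω => g (X ω)) {ω | g (X ω) ∈ P j}| = |m j| := by
    intro j
    have hEeq : {ω | f (X ω) = Y ω} = {ω | Y ω = f (X ω)} := by
      ext ω; exact eq_comm
    rw [hEeq, ce_term_eq μ _ _ _, ← hmμ j]
    congr 1
    -- ∫ hj j (X ω, Y ω) dμ = μ(E ∩ A).toReal - ∫_A g(X)
    have hfun : (fun ω => hj j (X ω, Y ω)) =
        Set.indicator {ω | g (X ω) ∈ P j}
          (fun ω => (if Y ω = f (X ω) then (1:ℝ) else 0) - g (X ω)) := by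
      funext ω
      by_cases h : g (X ω) ∈ P j <;>
        simp [hhj, hχ, Set.indicator, h]
    have hIint : Integrable (fun ω => if Y ω = f (X ω) then (1:ℝ) else 0)
        (μ.restrict {ω | g (X ω) ∈ P j}) := by
      refine (integrable_const (1 : ℝ)).mono'
        (Measurable.ite hE measurable_const measurable_const).aestronglyMeasurable
        (Filter.Eventually.of_forall fun ω => ?_)
      by_cases h : Y ω = f (X ω) <;> simp [h]
    have hgint : Integrable (fun ω => g (X ω)) (μ.restrict {ω | g (X ω) ∈ P j}) := by
      refine (integrable_const (1 : ℝ)).mono' (hg.comp hX).aestronglyMeasurable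
        (Filter.Eventually.of_forall fun ω => ?_)
      rw [Real.norm_eq_abs, abs_le]
      exact ⟨by linarith [(hg01 (X ω)).1], (hg01 (X ω)).2⟩
    rw [hfun, integral_indicator (hAmeas j), integral_sub hIint hgint]
    congr 1
    have hindic : (fun ω => if Y ω = f (X ω) then (1:ℝ) else 0) =
        Set.indicator {ω | Y ω = f (X ω)} (fun _ => (1:ℝ)) := by
      funext ω
      by_cases h : Y ω = f (X ω) <;> simp [Set.indicator, h]
    rw [hindic, setIntegral_indicator hE, setIntegral_const, smul_eq_mul, mul_one,
      Set.inter_comm]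
    rfl
  -- empirical terms
  have hemp : ∀ (j : Fin J) (ω' : Ω'),
      empWeight g (P j) N W ω' * |empGap f g (P j) N W ω'| =
        |∑ n : Fin N, hj j (W n ω')| / N := by
    intro j ω'
    have hsum : ∑ n ∈ binIndices g (P j) N W ω',
        ((if (W n ω').2 = f (W n ω').1 then (1:ℝ) else 0) - g (W n ω').1) =
        ∑ n : Fin N, hj j (W n ω') := by
      rw [binIndices, Finset.sum_filter]
    by_cases hc : (binIndices g (P j) N W ω').card = 0
    · rw [empGap, if_pos hc]
      have hempty : binIndices g (P j) N W ω' = ∅ := Finset.card_eq_zero.mp hc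
      rw [← hsum, hempty]
      simp
    · rw [empGap, if_neg hc, empWeight, ← hsum]
      have hcne : ((binIndices g (P j) N W ω').card : ℝ) ≠ 0 := Nat.cast_ne_zero.mpr hc
      have hNne : (N : ℝ) ≠ 0 := Nat.cast_ne_zero.mpr hN.ne'
      rw [abs_div, Nat.abs_cast]
      field_simp
  -- sign vectors and bad events
  set σ : (Fin J → Bool) → Fin J → ℝ := fun s j => if s j then 1 else -1 with hσ
  set φ : (Fin J → Bool) → 𝒳 × 𝒴 → ℝ := fun s q => ∑ j, σ s j * hj j q with hφ
  have hφmeas : ∀ s, Measurable (φ s) := fun s =>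
    Finset.measurable_sum _ (fun j _ => ((hjmeas j).const_mul _))
  have hσ1 : ∀ s j, |σ s j| ≤ 1 := by
    intro s j; by_cases h : s j <;> simp [hσ, h]
  have hφb : ∀ s q, |φ s q| ≤ 1 := by
    intro s q
    by_cases hex : ∃ j, g q.1 ∈ P j
    · obtain ⟨j0, hj0⟩ := hex
      have hsum : φ s q = σ s j0 * hj j0 q := by
        rw [hφ]
        refine Finset.sum_eq_single j0 (fun j _ hne => ?_)
          (fun h => absurd (Finset.mem_univ j0) h)
        have hnm : g q.1 ∉ P j := fun hmem => (Set.disjoint_left.mp (hPdisj hne) hmem) hj0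
        simp [hhj, hnm]
      rw [hsum, abs_mul]
      calc |σ s j0| * |hj j0 q| ≤ 1 * 1 :=
        mul_le_mul (hσ1 s j0) (hjb j0 q) (abs_nonneg _) zero_le_one
      _ = 1 := mul_one 1
    · push_neg at hex
      have h0 : φ s q = 0 := by
        rw [hφ]; exact Finset.sum_eq_zero (fun j _ => by simp [hhj, hex j])
      rw [h0]; simp
  set M : (Fin J → Bool) → ℝ := fun s => ∑ j, σ s j * m j with hM
  have hφν : ∀ s, ∫ q, φ s q ∂ν = M s := by
    intro s
    rw [hφ, hM]
    rw [integral_finset_sum _ (fun j _ => (hjint j).const_mul _)]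
    exact Finset.sum_congr rfl (fun j _ => integral_const_mul _ _)
  have hφPr : ∀ s n, ∫ ω', φ s (W n ω') ∂Pr = M s := by
    intro s n
    have h1 : ∫ ω', φ s (W n ω') ∂Pr = ∫ q, φ s q ∂(Measure.map (W n) Pr) :=
      (integral_map (hWmeas n).aemeasurable
        (by rw [hlaw n]; exact (hφmeas s).aestronglyMeasurable)).symm
    rw [h1, hlaw n, hφν s]
  -- the slack
  set L := 2 * Real.log 2 - Real.log δ with hL
  have hlogδ : Real.log δ < 0 := Real.log_neg hδ.1 hδ.2
  have hlog2 : 0 < Real.log 2 := Real.log_pos one_lt_two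
  have hLpos : 0 < L := by rw [hL]; linarith
  set ε : ℝ := (J : ℝ) * Real.sqrt 2 / Real.sqrt N * Real.sqrt L with hε
  have hNpos : (0:ℝ) < N := by exact_mod_cast hN
  have hεnn : 0 ≤ ε := by
    rw [hε]; positivity
  set B : (Fin J → Bool) → Set Ω' := fun s =>
    {ω' | (N : ℝ) * M s + N * ε ≤ ∑ n : Fin N, φ s (W n ω')} with hB
  have hBmeas : ∀ s, MeasurableSet (B s) := fun s =>
    measurableSet_le measurable_const
      (Finset.measurable_sum _ (fun n _ => (hφmeas s).comp (hWmeas n)))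
  have hBbound : ∀ s, Pr (B s) ≤ ENNReal.ofReal (Real.exp (-((N:ℝ) * ε ^ 2) / 2)) :=
    fun s => concentration Pr N W hWmeas hindep (φ s) (hφmeas s) (hφb s) (M s) (hφPr s) ε hεnn
  -- numerics
  have hNε : (N : ℝ) * ε ^ 2 / 2 = (J:ℝ)^2 * L := by
    have h1 : ε ^ 2 = (J:ℝ)^2 * (Real.sqrt 2)^2 / (Real.sqrt N)^2 * (Real.sqrt L)^2 := by
      rw [hε]; ring
    rw [Real.sq_sqrt (by norm_num : (0:ℝ) ≤ 2),
      Real.sq_sqrt (by positivity : (0:ℝ) ≤ (N:ℝ)), Real.sq_sqrt hLpos.le] at h1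
    rw [h1]
    field_simp
  have hJ1 : (1:ℝ) ≤ J := by exact_mod_cast hJ
  have hnum : (2:ℝ)^J * Real.exp (-((N:ℝ) * ε ^ 2) / 2) ≤ δ := by
    have h2 : (2:ℝ)^J = Real.exp ((J:ℝ) * Real.log 2) := by
      rw [Real.exp_nat_mul, Real.exp_log (by norm_num : (0:ℝ) < 2)]
    have h3 : -((N:ℝ) * ε ^ 2) / 2 = -((J:ℝ)^2 * L) := by
      rw [← hNε]; ring
    rw [h2, h3, ← Real.exp_add]
    rw [show δ = Real.exp (Real.log δ) from (Real.exp_log hδ.1).symm]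
    refine Real.exp_le_exp.mpr ?_
    rw [hL]
    have hJ2 : (1:ℝ) ≤ (J:ℝ)^2 := by nlinarith
    nlinarith [mul_nonneg (sub_nonneg.mpr hJ2) (neg_nonneg.mpr hlogδ.le),
      mul_nonneg (by nlinarith : (0:ℝ) ≤ 2*(J:ℝ)^2 - J) hlog2.le]
  have hunion : Pr (⋃ s : Fin J → Bool, B s) ≤ ENNReal.ofReal δ := by
    calc Pr (⋃ s : Fin J → Bool, B s) ≤ ∑' s : Fin J → Bool, Pr (B s) := measure_iUnion_le _
    _ = ∑ s : Fin J → Bool, Pr (B s) := tsum_fintype _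
    _ ≤ ∑ _s : Fin J → Bool, ENNReal.ofReal (Real.exp (-((N:ℝ) * ε ^ 2) / 2)) :=
        Finset.sum_le_sum (fun s _ => hBbound s)
    _ = (Fintype.card (Fin J → Bool)) *
        ENNReal.ofReal (Real.exp (-((N:ℝ) * ε ^ 2) / 2)) := by
        rw [Finset.sum_const, nsmul_eq_mul, Finset.card_univ]
    _ ≤ ENNReal.ofReal δ := by
        have hcard : (Fintype.card (Fin J → Bool)) = 2^J := by
          rw [Fintype.card_fun]; simp
        rw [hcard]
        have hc1 : ((2^J : ℕ) : ENNReal) = ENNReal.ofReal ((2:ℝ)^J) := by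
          rw [← ENNReal.ofReal_natCast]
          congr 1
          push_cast
          ring
        rw [hc1, ← ENNReal.ofReal_mul (by positivity)]
        exact ENNReal.ofReal_le_ofReal hnum
  -- inclusion of the good event
  have hsubset : (⋃ s : Fin J → Bool, B s)ᶜ ⊆ {ω' |
      (∑ j : Fin J, (μ {ω | g (X ω) ∈ P j}).toReal *
          |condProbE μ {ω | f (X ω) = Y ω} {ω | g (X ω) ∈ P j} -
            condMeanE μ (fun ω => g (X ω)) {ω | g (X ω) ∈ P j}|) ≤
        (∑ j : Fin J, empWeight g (P j) N W ω' * |empGap f g (P j) N W ω'|) +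
          (J : ℝ) * Real.sqrt 2 / Real.sqrt N * Real.sqrt L} := by
    intro ω' hω'
    simp only [Set.mem_compl_iff, Set.mem_iUnion, not_exists] at hω'
    simp only [Set.mem_setOf_eq]
    set S : Fin J → ℝ := fun j => ∑ n : Fin N, hj j (W n ω') with hS
    have hφS : ∀ s, ∑ n : Fin N, φ s (W n ω') = ∑ j, σ s j * S j := by
      intro s
      rw [hφ, hS, Finset.sum_comm]
      exact Finset.sum_congr rfl (fun j _ => by rw [Finset.mul_sum])
    have hbad : ∀ s, ∑ j, σ s j * S j < (N:ℝ) * M s + N * ε := by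
      intro s
      have := hω' s
      rw [hB, Set.mem_setOf_eq, not_le, hφS s] at this
      exact this
    set s0 : Fin J → Bool := fun j => decide (m j ≤ S j / N) with hs0
    have hkey : ∑ j, |m j - S j / N| ≤ ε := by
      have h1 : ∑ j, |m j - S j / N| = ∑ j, σ s0 j * (S j / N - m j) := by
        refine Finset.sum_congr rfl (fun j _ => ?_)
        by_cases h : m j ≤ S j / N
        · have hs : σ s0 j = 1 := by simp [hσ, hs0, h]
          rw [abs_of_nonpos (by linarith : m j - S j / N ≤ 0), hs]
          ring
        · have hs : σ s0 j = -1 := by simp [hσ, hs0, h]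
          rw [abs_of_pos (by push_neg at h; linarith : 0 < m j - S j / N), hs]
          ring
      have h2 : ∑ j, σ s0 j * (S j / N - m j) =
          (∑ j, σ s0 j * S j) / N - M s0 := by
        rw [hM, Finset.sum_div, ← Finset.sum_sub_distrib]
        refine Finset.sum_congr rfl (fun j _ => ?_)
        field_simp
      have h3 : (∑ j, σ s0 j * S j) / N < M s0 + ε := by
        rw [div_lt_iff₀ hNpos]
        nlinarith [hbad s0]
      rw [h1, h2]
      linarith
    calc (∑ j : Fin J, (μ {ω | g (X ω) ∈ P j}).toReal *
          |condProbE μ {ω | f (X ω) = Y ω} {ω | g (X ω) ∈ P j} -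
            condMeanE μ (fun ω => g (X ω)) {ω | g (X ω) ∈ P j}|)
        = ∑ j, |m j| := Finset.sum_congr rfl (fun j _ => hCE j)
    _ ≤ ∑ j, (|S j| / N + |m j - S j / N|) := by
        refine Finset.sum_le_sum (fun j _ => ?_)
        have h4 : |m j| = |S j / N + (m j - S j / N)| := by
          congr 1; ring
        rw [h4]
        calc |S j / N + (m j - S j / N)| ≤ |S j / N| + |m j - S j / N| := abs_add_le _ _
        _ = |S j| / N + |m j - S j / N| := by
            rw [abs_div, abs_of_pos hNpos]
    _ = (∑ j, |S j| / N) + ∑ j, |m j - S j / N| := Finset.sum_add_distrib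
    _ ≤ (∑ j : Fin J, empWeight g (P j) N W ω' * |empGap f g (P j) N W ω'|) + ε := by
        refine add_le_add (le_of_eq ?_) hkey
        exact Finset.sum_congr rfl (fun j _ => (hemp j ω').symm)
    _ = (∑ j : Fin J, empWeight g (P j) N W ω' * |empGap f g (P j) N W ω'|) +
          (J : ℝ) * Real.sqrt 2 / Real.sqrt N * Real.sqrt L := by rw [hε]
  calc 1 - ENNReal.ofReal δ ≤ 1 - Pr (⋃ s : Fin J → Bool, B s) :=
      tsub_le_tsub_left hunion 1
  _ = Pr ((⋃ s : Fin J → Bool, B s)ᶜ) :=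
      (prob_compl_eq_one_sub (MeasurableSet.iUnion hBmeas)).symm
  _ ≤ _ := measure_mono hsubset
end

section
/- Correctness of the per-example calibrated confidence (special case of Theorem 1 underlying the Hoki algorithm): in the product-space model, suppose that for each bin index j, for (ν)-almost every ω₁ with g(x(ω₁)) ∈ P_j, the calibrator satisfies g(x(ω₁)) = (α_j − β_j) · γ(x(ω₁)) + β_j, where for each j the constants α_j, β_j are defined (with μ = ν ⊗ ρ, E = {f ∘ X' = f ∘ X}, C = {f ∘ X = Y ∘ fst}, A_j = {g ∘ X ∈ P_j}) by α_j = μ[C | E ∩ A_j] and β_j = μ[C | Eᶜ ∩ A_j]. Then CE(g) = 0. -/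
open MeasureTheory

lemma condProbE_mul {Ω : Type*} [MeasurableSpace Ω] (μ : Measure Ω) [IsFiniteMeasure μ]
    (E A : Set Ω) : condProbE μ E A * (μ A).toReal = (μ (E ∩ A)).toReal := by
  unfold condProbE
  split_ifs with h
  · simp [measure_inter_null_of_null_right E h]
  · rw [div_mul_cancel₀]
    exact ENNReal.toReal_ne_zero.mpr ⟨h, measure_ne_top μ A⟩

/-- Correctness of the per-example calibrated confidence (special case of Theorem 1
underlying the Hoki algorithm): in the product-space model, if for each bin `j` and
`ν`-almost every input in the bin the calibrator satisfies
`g(x) = (α_j - β_j) · γ(x) + β_j`, then `CE(g) = 0`. -/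
theorem per_example_calibrated_confidence_perfect
    {𝒳 𝒴 : Type*} [MeasurableSpace 𝒳] [MeasurableSpace 𝒴]
    [Countable 𝒴] [MeasurableSingletonClass 𝒴]
    (f : 𝒳 → 𝒴) (hf : Measurable f)
    (g : 𝒳 → ℝ) (hg : Measurable g) (hg01 : ∀ s, g s ∈ Set.Icc (0 : ℝ) 1)
    (J : ℕ) (hJ : 0 < J) (P : Fin J → Set ℝ)
    (hPmeas : ∀ j, MeasurableSet (P j))
    (hPdisj : Pairwise (Function.onFun Disjoint P))
    (hPcover : Set.Icc (0 : ℝ) 1 ⊆ ⋃ j, P j)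
    {Ω₁ Ω₂ : Type*} [MeasurableSpace Ω₁] [MeasurableSpace Ω₂]
    (ν : Measure Ω₁) (ρ : Measure Ω₂)
    [IsProbabilityMeasure ν] [IsProbabilityMeasure ρ]
    (x : Ω₁ → 𝒳) (hx : Measurable x) (Y : Ω₁ → 𝒴) (hY : Measurable Y)
    (h : 𝒳 × Ω₂ → 𝒳) (hh : Measurable h)
    (γ : 𝒳 → ℝ) (hγ : ∀ s : 𝒳, γ s = (ρ {ω₂ | f (h (s, ω₂)) = f s}).toReal)
    (hcal : ∀ j : Fin J, ∀ᵐ ω₁ ∂ν, g (x ω₁) ∈ P j →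
      g (x ω₁) =
        (condProbE (ν.prod ρ) {ω : Ω₁ × Ω₂ | f (x ω.1) = Y ω.1}
            ({ω : Ω₁ × Ω₂ | f (h (x ω.1, ω.2)) = f (x ω.1)} ∩
              {ω : Ω₁ × Ω₂ | g (x ω.1) ∈ P j}) -
          condProbE (ν.prod ρ) {ω : Ω₁ × Ω₂ | f (x ω.1) = Y ω.1}
            ({ω : Ω₁ × Ω₂ | f (h (x ω.1, ω.2)) = f (x ω.1)}ᶜ ∩
              {ω : Ω₁ × Ω₂ | g (x ω.1) ∈ P j})) * γ (x ω₁) +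
        condProbE (ν.prod ρ) {ω : Ω₁ × Ω₂ | f (x ω.1) = Y ω.1}
          ({ω : Ω₁ × Ω₂ | f (h (x ω.1, ω.2)) = f (x ω.1)}ᶜ ∩
            {ω : Ω₁ × Ω₂ | g (x ω.1) ∈ P j})) :
    (∑ j : Fin J, ((ν.prod ρ) {ω : Ω₁ × Ω₂ | g (x ω.1) ∈ P j}).toReal *
        |condProbE (ν.prod ρ) {ω : Ω₁ × Ω₂ | f (x ω.1) = Y ω.1}
            {ω : Ω₁ × Ω₂ | g (x ω.1) ∈ P j} -
          condMeanE (ν.prod ρ) (fun ω : Ω₁ × Ω₂ => g (x ω.1))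
            {ω : Ω₁ × Ω₂ | g (x ω.1) ∈ P j}|) = 0 := by
  refine Finset.sum_eq_zero fun j _ => ?_
  set μ := ν.prod ρ with hμdef
  set C : Set (Ω₁ × Ω₂) := {ω | f (x ω.1) = Y ω.1} with hCdef
  set E : Set (Ω₁ × Ω₂) := {ω | f (h (x ω.1, ω.2)) = f (x ω.1)} with hEdef
  set A : Set (Ω₁ × Ω₂) := {ω | g (x ω.1) ∈ P j} with hAdef
  set B : Set Ω₁ := {ω₁ | g (x ω₁) ∈ P j} with hBdef
  have hxf : Measurable fun ω : Ω₁ × Ω₂ => x ω.1 := hx.comp measurable_fst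
  have hCm : MeasurableSet C := by
    rw [hCdef]
    exact measurableSet_eq_fun (hf.comp hxf) (hY.comp measurable_fst)
  have hEm : MeasurableSet E := by
    rw [hEdef]
    exact measurableSet_eq_fun
      (hf.comp (hh.comp (hxf.prodMk measurable_snd))) (hf.comp hxf)
  have hBm : MeasurableSet B := by rw [hBdef]; exact (hg.comp hx) (hPmeas j)
  have hAB : A = B ×ˢ Set.univ := by
    rw [hAdef, hBdef]; ext ω; simp [Set.mem_prod]
  have hAm : MeasurableSet A := hAB ▸ hBm.prod MeasurableSet.univ
  have hμA : μ A = ν B := by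
    rw [hAB, hμdef, Measure.prod_prod, measure_univ, mul_one]
  rcases eq_or_ne (μ A) 0 with h0 | h0
  · simp [h0]
  -- measurability of the kernel of `E`
  have hmeasS : Measurable fun ω₁ => ρ (Prod.mk ω₁ ⁻¹' E) :=
    measurable_measure_prodMk_left hEm
  -- Fubini: mass of E ∩ A
  have hEA : μ (E ∩ A) = ∫⁻ ω₁ in B, ρ (Prod.mk ω₁ ⁻¹' E) ∂ν := by
    rw [hμdef, Measure.prod_apply (hEm.inter hAm), ← lintegral_indicator hBm]
    congr 1
    funext ω₁
    by_cases hb : ω₁ ∈ B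
    · rw [Set.indicator_of_mem hb]
      congr 1
      ext ω₂
      simp only [Set.mem_preimage, Set.mem_inter_iff]
      refine and_iff_left ?_
      rw [hAdef]; exact hb
    · rw [Set.indicator_of_notMem hb]
      have he : Prod.mk ω₁ ⁻¹' (E ∩ A) = ∅ := by
        ext ω₂
        simp only [Set.mem_preimage, Set.mem_inter_iff, Set.mem_empty_iff_false, iff_false,
          not_and]
        intro _
        rw [hAdef]; exact hb
      rw [he, measure_empty]
  -- γ ∘ x as toReal of the kernel
  have hγx : (fun ω₁ => γ (x ω₁)) = fun ω₁ => (ρ (Prod.mk ω₁ ⁻¹' E)).toReal := by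
    funext ω₁
    rw [hγ, hEdef]
    rfl
  have hγmeas : Measurable fun ω₁ => γ (x ω₁) := by
    rw [hγx]; exact hmeasS.ennreal_toReal
  have ha : ∫ ω₁ in B, γ (x ω₁) ∂ν = (μ (E ∩ A)).toReal := by
    rw [hEA, ← integral_toReal (hmeasS.aemeasurable.restrict)
      (ae_of_all _ fun ω₁ => measure_lt_top ρ _)]
    exact integral_congr_ae (ae_of_all _ fun ω₁ => congrFun hγx ω₁)
  -- set integral of g over A reduces to B
  have hgint : Integrable (fun ω : Ω₁ × Ω₂ => g (x ω.1)) ((ν.restrict B).prod ρ) := by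
    refine (integrable_const (1 : ℝ)).mono' (hg.comp hxf).aestronglyMeasurable
      (ae_of_all _ fun ω => ?_)
    have := hg01 (x ω.1)
    rw [Real.norm_eq_abs, abs_le]
    exact ⟨by linarith [this.1], this.2⟩
  have hint : ∫ ω in A, g (x ω.1) ∂μ = ∫ ω₁ in B, g (x ω₁) ∂ν := by
    have hrr : μ.restrict A = (ν.restrict B).prod ρ := by
      rw [hAB, hμdef, Measure.restrict_prod_eq_prod_univ]
    rw [hrr, integral_prod _ hgint]
    simp
  -- integrability of γ ∘ x on B
  have hγint' : Integrable (fun ω₁ => γ (x ω₁)) (ν.restrict B) := by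
    refine (integrable_const (1 : ℝ)).mono' hγmeas.aestronglyMeasurable
      (ae_of_all _ fun ω₁ => ?_)
    rw [congrFun hγx ω₁, Real.norm_eq_abs, abs_of_nonneg ENNReal.toReal_nonneg]
    simpa using ENNReal.toReal_mono ENNReal.one_ne_top (prob_le_one (μ := ρ))
  set α := condProbE μ C (E ∩ A) with hαdef
  set β := condProbE μ C (Eᶜ ∩ A) with hβdef
  -- calibration identity integrated over B
  have hcalB : ∫ ω₁ in B, g (x ω₁) ∂ν
      = (α - β) * (∫ ω₁ in B, γ (x ω₁) ∂ν) + β * (ν B).toReal := by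
    have hc := hcal j
    rw [setIntegral_congr_ae hBm (hc.mono fun ω₁ hω₁ hb => hω₁ (by rw [hBdef] at hb; exact hb))]
    rw [integral_add (hγint'.const_mul _) (integrable_const β), integral_const_mul,
      integral_const, measureReal_restrict_apply_univ, measureReal_def, smul_eq_mul, mul_comm (ν B).toReal]
  -- splitting identities
  have hsplit : (μ (E ∩ A)).toReal + (μ (Eᶜ ∩ A)).toReal = (μ A).toReal := by
    rw [← ENNReal.toReal_add (measure_ne_top _ _) (measure_ne_top _ _)]
    congr 1
    rw [Set.inter_comm E, Set.inter_comm Eᶜ, ← Set.diff_eq]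
    exact measure_inter_add_diff A hEm
  have hsplitC : (μ (C ∩ (E ∩ A))).toReal + (μ (C ∩ (Eᶜ ∩ A))).toReal
      = (μ (C ∩ A)).toReal := by
    rw [← ENNReal.toReal_add (measure_ne_top _ _) (measure_ne_top _ _)]
    congr 1
    have e1 : C ∩ (E ∩ A) = (C ∩ A) ∩ E := by ext ω; simp only [Set.mem_inter_iff]; tauto
    have e2 : C ∩ (Eᶜ ∩ A) = (C ∩ A) \ E := by
      ext ω; simp only [Set.mem_inter_iff, Set.mem_diff, Set.mem_compl_iff]; tauto
    rw [e1, e2]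
    exact measure_inter_add_diff _ hEm
  have h1 : α * (μ (E ∩ A)).toReal = (μ (C ∩ (E ∩ A))).toReal := condProbE_mul μ C (E ∩ A)
  have h2 : β * (μ (Eᶜ ∩ A)).toReal = (μ (C ∩ (Eᶜ ∩ A))).toReal := condProbE_mul μ C (Eᶜ ∩ A)
  -- the main identity
  have hfinal : (μ (C ∩ A)).toReal = ∫ ω in A, g (x ω.1) ∂μ := by
    rw [hint, hcalB, ha, ← hμA, ← hsplit, ← hsplitC, ← h1, ← h2]
    ring
  have heq : condProbE μ C A = condMeanE μ (fun ω : Ω₁ × Ω₂ => g (x ω.1)) A := by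
    unfold condProbE condMeanE
    rw [if_neg h0, if_neg h0, hfinal]
  rw [heq]
  simp
end
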